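/- There exists a closed reflexive symmetric relation E on the Cantor space 2^ℕ and a countable topologically dense set D ⊆ 2^ℕ such that the induced graph on D satisfies property (R) (and hence is isomorphic to the random graph), and the graph (2^ℕ, E) has no isolated vertices, i.e. every x ∈ 2^ℕ is adjacent to some y ≠ x. -/

import Mathlib

open Finset in
/-- value of the window of `s` at positions `n+1, ..., n+L`. -/
def valw (s : ℕ → Bool) (n L : ℕ) : ℕ :=
  ∑ i ∈ Finset.range L, if s (n+1+i) then 2^i else 0

lemma valw_lt (s : ℕ → Bool) (n L : ℕ) : valw s n L < 2^L := by
  induction L with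
  | zero => simp [valw]
  | succ L ih =>
    have : valw s n (L+1) = valw s n L + (if s (n+1+L) then 2^L else 0) := by
      simp [valw, Finset.sum_range_succ]
    rw [this, pow_succ]
    have h2 : (if s (n+1+L) then 2^L else 0) ≤ 2^L := by split <;> omega
    omega

lemma valw_congr {s s' : ℕ → Bool} {n L : ℕ}
    (h : ∀ i, i < L → s (n+1+i) = s' (n+1+i)) : valw s n L = valw s' n L := by
  unfold valw
  refine Finset.sum_congr rfl fun i hi => ?_
  rw [h i (Finset.mem_range.mp hi)]

lemma valw_inj {s s' : ℕ → Bool} {n L : ℕ}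
    (h : valw s n L = valw s' n L) : ∀ i, i < L → s (n+1+i) = s' (n+1+i) := by
  induction L with
  | zero => intro i hi; omega
  | succ L ih =>
    have e1 : valw s n (L+1) = valw s n L + (if s (n+1+L) then 2^L else 0) := by
      simp [valw, Finset.sum_range_succ]
    have e2 : valw s' n (L+1) = valw s' n L + (if s' (n+1+L) then 2^L else 0) := by
      simp [valw, Finset.sum_range_succ]
    have b1 := valw_lt s n L
    have b2 := valw_lt s' n L
    rw [e1, e2] at h
    have hlast : s (n+1+L) = s' (n+1+L) := by
      cases h1 : s (n+1+L) <;> cases h2 : s' (n+1+L) <;> simp [h1, h2] at h ⊢ <;> omega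
    have heq : valw s n L = valw s' n L := by
      rw [hlast] at h
      split at h <;> omega
    intro i hi
    rcases Nat.lt_succ_iff_lt_or_eq.mp hi with h' | h'
    · exact ih heq i h'
    · rw [h']; exact hlast

/-- pointer position -/
def ptrp (n m m' : ℕ) (s : ℕ → Bool) : ℕ :=
  m' + 1 + n * 2 ^ (m' - m - 1) + valw s n (m' - m - 1)

/-- certificate predicate: `t` (the true side at the first difference `n`)
encodes two runs ending at `m` and `m'`, and the table bit indexed by `s`'s
window is `true`. -/
def Pointc (t s : ℕ → Bool) (n : ℕ) : Prop :=
  ∃ m, n < m ∧ (∀ j, n < j → j < m → t j = true) ∧ t m = false ∧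
  ∃ m', m < m' ∧ (∀ j, m < j → j < m' → t j = true) ∧ t m' = false ∧
  t (ptrp n m m' s) = true

def Badg (x y : ℕ → Bool) : Prop :=
  ∃ n, (∀ i, i < n → x i = y i) ∧ x n ≠ y n ∧
    Pointc (if x n then x else y) (if x n then y else x) n

def Egr (x y : ℕ → Bool) : Prop := x = y ∨ ¬ Badg x y

lemma firstdiff_unique {x y : ℕ → Bool} {n n' : ℕ}
    (h1 : ∀ i, i < n → x i = y i) (h2 : x n ≠ y n)
    (h1' : ∀ i, i < n' → x i = y i) (h2' : x n' ≠ y n') : n = n' := by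
  rcases lt_trichotomy n n' with h | h | h
  · exact absurd (h1' n h) h2
  · exact h
  · exact absurd (h1 n' h) h2'

lemma run_unique {t : ℕ → Bool} {n m m' : ℕ}
    (hm : n < m) (hr : ∀ j, n < j → j < m → t j = true) (hf : t m = false)
    (hm' : n < m') (hr' : ∀ j, n < j → j < m' → t j = true) (hf' : t m' = false) :
    m = m' := by
  rcases lt_trichotomy m m' with h | h | h
  · exact absurd (hr' m hm h) (by simp [hf])
  · exact h
  · exact absurd (hr m' hm' h) (by simp [hf'])

lemma Badg_symm {x y : ℕ → Bool} (h : Badg x y) : Badg y x := by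
  obtain ⟨n, h1, h2, h3⟩ := h
  refine ⟨n, fun i hi => (h1 i hi).symm, fun hc => h2 hc.symm, ?_⟩
  cases hx : x n <;> cases hy : y n <;> simp [hx, hy] at h2 ⊢ <;>
    simpa [hx, hy] using h3

lemma Egr_refl (x : ℕ → Bool) : Egr x x := Or.inl rfl

lemma Egr_symm {x y : ℕ → Bool} (h : Egr x y) : Egr y x := by
  rcases h with h | h
  · exact Or.inl h.symm
  · exact Or.inr fun hb => h (Badg_symm hb)

lemma isOpen_coord_fst (i : ℕ) (b : Bool) :
    IsOpen {q : (ℕ → Bool) × (ℕ → Bool) | q.1 i = b} := by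
  have h : {q : (ℕ → Bool) × (ℕ → Bool) | q.1 i = b}
      = (fun q : (ℕ → Bool) × (ℕ → Bool) => q.1 i) ⁻¹' {b} := rfl
  rw [h]
  exact (isOpen_discrete {b}).preimage ((continuous_apply i).comp continuous_fst)

lemma isOpen_coord_snd (i : ℕ) (b : Bool) :
    IsOpen {q : (ℕ → Bool) × (ℕ → Bool) | q.2 i = b} := by
  have h : {q : (ℕ → Bool) × (ℕ → Bool) | q.2 i = b}
      = (fun q : (ℕ → Bool) × (ℕ → Bool) => q.2 i) ⁻¹' {b} := rfl
  rw [h]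
  exact (isOpen_discrete {b}).preimage ((continuous_apply i).comp continuous_snd)

lemma Egr_closed : IsClosed {p : (ℕ → Bool) × (ℕ → Bool) | Egr p.1 p.2} := by
  rw [← isOpen_compl_iff, isOpen_iff_mem_nhds]
  rintro ⟨x, y⟩ hp
  simp only [Set.mem_compl_iff, Set.mem_setOf_eq, Egr, not_or, not_not] at hp
  obtain ⟨hne, n, h1, h2, hP⟩ := hp
  obtain ⟨m, hm1, hm2, hm3, m', hm'1, hm'2, hm'3, hbit⟩ := hP
  obtain ⟨K, hKn, hKm, hKm', hKw, hKp⟩ :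
      ∃ K, n ≤ K ∧ m ≤ K ∧ m' ≤ K ∧ n + 1 + (m' - m - 1) ≤ K ∧
        ptrp n m m' (if x n then y else x) ≤ K := by
    refine ⟨m' + 1 + n * 2 ^ (m' - m - 1) + valw (if x n then y else x) n (m' - m - 1)
        + n + (m' - m - 1) + 1, by omega, by omega, by omega, by omega, ?_⟩
    unfold ptrp; omega
  refine Filter.mem_of_superset (IsOpen.mem_nhds ?_ (?_ :
      (x, y) ∈ ({q | ∀ i, i ≤ K → q.1 i = x i} ∩ {q | ∀ i, i ≤ K → q.2 i = y i}))) ?_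
  · have o1 : IsOpen {q : (ℕ → Bool) × (ℕ → Bool) | ∀ i, i ≤ K → q.1 i = x i} := by
      have h : {q : (ℕ → Bool) × (ℕ → Bool) | ∀ i, i ≤ K → q.1 i = x i} =
          ⋂ i ∈ Finset.range (K+1), {q : (ℕ → Bool) × (ℕ → Bool) | q.1 i = x i} := by
        ext q; simp [Nat.lt_succ_iff]
      rw [h]
      exact isOpen_biInter_finset fun i _ => isOpen_coord_fst i (x i)
    have o2 : IsOpen {q : (ℕ → Bool) × (ℕ → Bool) | ∀ i, i ≤ K → q.2 i = y i} := by
      have h : {q : (ℕ → Bool) × (ℕ → Bool) | ∀ i, i ≤ K → q.2 i = y i} =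
          ⋂ i ∈ Finset.range (K+1), {q : (ℕ → Bool) × (ℕ → Bool) | q.2 i = y i} := by
        ext q; simp [Nat.lt_succ_iff]
      rw [h]
      exact isOpen_biInter_finset fun i _ => isOpen_coord_snd i (y i)
    exact o1.inter o2
  · exact ⟨fun i _ => rfl, fun i _ => rfl⟩
  rintro ⟨x', y'⟩ ⟨hq1, hq2⟩
  simp only [Set.mem_setOf_eq] at hq1 hq2
  simp only [Set.mem_compl_iff, Set.mem_setOf_eq, Egr, not_or, not_not]
  have hxn : x' n = x n := hq1 n hKn
  have hyn : y' n = y n := hq2 n hKn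
  have hsel : ∀ j, j ≤ K →
      ((if x' n then x' else y') j = (if x n then x else y) j ∧
       (if x' n then y' else x') j = (if x n then y else x) j) := by
    intro j hj
    rw [hxn]
    cases hxb : x n
    · simp only [hxb, Bool.false_eq_true, if_false]
      exact ⟨hq2 j hj, hq1 j hj⟩
    · simp only [hxb, if_true]
      exact ⟨hq1 j hj, hq2 j hj⟩
  constructor
  · intro hcontra
    apply h2
    rw [← hxn, ← hyn, hcontra]
  · refine ⟨n, fun i hi => ?_, ?_, ?_⟩
    · rw [hq1 i (by omega), hq2 i (by omega)]; exact h1 i hi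
    · rw [hxn, hyn]; exact h2
    · refine ⟨m, hm1, ?_, ?_, m', hm'1, ?_, ?_, ?_⟩
      · intro j hj1 hj2
        rw [(hsel j (by omega)).1]; exact hm2 j hj1 hj2
      · rw [(hsel m hKm).1]; exact hm3
      · intro j hj1 hj2
        rw [(hsel j (by omega)).1]; exact hm'2 j hj1 hj2
      · rw [(hsel m' hKm').1]; exact hm'3
      · have hval : valw (if x' n then y' else x') n (m' - m - 1)
            = valw (if x n then y else x) n (m' - m - 1) := by
          apply valw_congr
          intro i hi
          exact (hsel (n+1+i) (by omega)).2
        have hptr : ptrp n m m' (if x' n then y' else x')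
            = ptrp n m m' (if x n then y else x) := by
          unfold ptrp; rw [hval]
        rw [hptr, (hsel _ hKp).1]
        exact hbit

def Dset : Set (ℕ → Bool) := {f | ∃ N, ∀ k, N ≤ k → f k = false}

lemma Dset_countable : Dset.Countable := by
  have h : Dset = ⋃ N : ℕ, {f : ℕ → Bool | ∀ k, N ≤ k → f k = false} := by
    ext f; simp [Dset]
  rw [h]
  refine Set.countable_iUnion fun N => ?_
  have hsub : {f : ℕ → Bool | ∀ k, N ≤ k → f k = false} ⊆
      Set.range (fun g : Fin N → Bool => fun k => if h : k < N then g ⟨k, h⟩ else false) := by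
    intro f hf
    refine ⟨fun i => f i, ?_⟩
    funext k
    by_cases h : k < N
    · simp [h]
    · simp only [dif_neg h]
      exact (hf k (by omega)).symm
  exact (Set.countable_range _).mono hsub

lemma Dset_dense : Dense Dset := by
  rw [dense_iff_inter_open]
  intro U hU ⟨f, hf⟩
  obtain ⟨I, u, hIu, hsub⟩ := isOpen_pi_iff.mp hU f hf
  refine ⟨fun k => if k ∈ I then f k else false, hsub ?_, ?_⟩
  · intro a ha
    have ha' : a ∈ I := ha
    have : (fun k => if k ∈ I then f k else false) a = f a := if_pos ha'
    rw [this]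
    exact (hIu a ha').2
  · refine ⟨(I.sup id) + 1, fun k hk => ?_⟩
    have : k ∉ I := by
      intro hkI
      have := Finset.le_sup (f := id) hkI
      simp only [id] at this
      omega
    simp [this]

lemma no_isolated (x : ℕ → Bool) : ∃ y, y ≠ x ∧ Egr x y := by
  by_cases h : ∃ k, x k = false
  · obtain ⟨k, hk⟩ := h
    refine ⟨fun j => if j < k then x j else true, ?_, ?_⟩
    · intro hc
      have := congrFun hc k
      simp [hk] at this
    · refine Or.inr ?_
      rintro ⟨n, h1, h2, hP⟩
      have hagree : ∀ i, i < k → x i = (fun j => if j < k then x j else true) i := by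
        intro i hi; simp [hi]
      have hdiff : x k ≠ (fun j => if j < k then x j else true) k := by
        simp [hk]
      have hnk : n = k := firstdiff_unique h1 h2 hagree hdiff
      subst hnk
      rw [hk] at hP
      simp only [Bool.false_eq_true, if_false] at hP
      obtain ⟨m, hm1, _, hm3, _⟩ := hP
      simp only [show ¬ m < n from by omega, if_false] at hm3
      exact absurd hm3 (by simp)
  · push_neg at h
    refine ⟨fun _ => false, ?_, ?_⟩
    · intro hc
      have := congrFun hc 0
      simp [h 0] at this
    · refine Or.inr ?_
      rintro ⟨n, h1, h2, hP⟩
      simp only [ne_eq, Bool.not_eq_false] at h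
      rw [h n] at hP
      simp only [if_true] at hP
      obtain ⟨m, hm1, _, hm3, _⟩ := hP
      exact absurd hm3 (by simp [h m])

open Classical in
noncomputable def nnf (u : ℕ → Bool) : ℕ :=
  if h : ∃ k, u k = false then Nat.find h else 0

lemma nnf_false {u : ℕ → Bool} (h : ∃ k, u k = false) : u (nnf u) = false := by
  unfold nnf; rw [dif_pos h]; exact Nat.find_spec h

lemma nnf_lt {u : ℕ → Bool} (h : ∃ k, u k = false) :
    ∀ k, k < nnf u → u k = true := by
  intro k hk
  unfold nnf at hk; rw [dif_pos h] at hk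
  have := Nat.find_min h hk
  simpa using this

lemma nnf_le {u : ℕ → Bool} {k : ℕ} (hk : u k = false) : nnf u ≤ k := by
  unfold nnf; rw [dif_pos ⟨k, hk⟩]; exact Nat.find_min' _ hk

noncomputable def posf (N : ℕ) (u : ℕ → Bool) : ℕ :=
  2*N + 3 + nnf u * 2^N + valw u (nnf u) N

open Classical in
noncomputable def vfun (N : ℕ) (B : Finset (ℕ → Bool)) : ℕ → Bool := fun k =>
  if k = N + 1 then false
  else if k = 2*N + 2 then false
  else if k < 2*N + 2 then true
  else if ∃ u ∈ B, posf N u = k then true else false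

lemma vfun_true {N : ℕ} {B : Finset (ℕ → Bool)} {k : ℕ}
    (h1 : k < 2*N + 2) (h2 : k ≠ N + 1) : vfun N B k = true := by
  unfold vfun; rw [if_neg h2, if_neg (by omega), if_pos h1]

lemma vfun_m0 {N : ℕ} {B : Finset (ℕ → Bool)} : vfun N B (N+1) = false := by
  unfold vfun; rw [if_pos rfl]

lemma vfun_m1 {N : ℕ} {B : Finset (ℕ → Bool)} : vfun N B (2*N+2) = false := by
  unfold vfun; rw [if_neg (by omega), if_pos rfl]

lemma vfun_table {N : ℕ} {B : Finset (ℕ → Bool)} {k : ℕ} (h : 2*N + 2 < k) :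
    vfun N B k = true ↔ ∃ u ∈ B, posf N u = k := by
  classical
  unfold vfun
  rw [if_neg (by omega), if_neg (by omega), if_neg (by omega)]
  by_cases hex : ∃ u ∈ B, posf N u = k <;> simp [hex]

lemma vfun_agree_below {N : ℕ} {B : Finset (ℕ → Bool)} {u : ℕ → Bool}
    (hfex : ∃ k, u k = false) (hle : nnf u ≤ N) :
    (∀ i, i < nnf u → vfun N B i = u i) ∧ vfun N B (nnf u) ≠ u (nnf u) := by
  constructor
  · intro i hi
    rw [vfun_true (by omega) (by omega), nnf_lt hfex i hi]
  · rw [vfun_true (by omega) (by omega), nnf_false hfex]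
    exact fun hc => by simp at hc

lemma ptrp_eq_posf {N : ℕ} (u : ℕ → Bool) :
    ptrp (nnf u) (N+1) (2*N+2) u = posf N u := by
  unfold ptrp posf
  have h : 2*N + 2 - (N+1) - 1 = N := by omega
  rw [h]

lemma badg_vfun_iff {N : ℕ} {B : Finset (ℕ → Bool)} {u : ℕ → Bool}
    (hfex : ∃ k, u k = false) (hle : nnf u ≤ N) :
    Badg (vfun N B) u ↔ vfun N B (posf N u) = true := by
  obtain ⟨hagree, hdiff⟩ := vfun_agree_below (B := B) hfex hle
  have hvn : vfun N B (nnf u) = true := vfun_true (by omega) (by omega)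
  have hrun1 : ∀ j, nnf u < j → j < N + 1 → vfun N B j = true :=
    fun j h1 h2 => vfun_true (by omega) (by omega)
  have hrun2 : ∀ j, N + 1 < j → j < 2*N + 2 → vfun N B j = true :=
    fun j h1 h2 => vfun_true (by omega) (by omega)
  constructor
  · rintro ⟨n, h1, h2, hP⟩
    have hn : n = nnf u := firstdiff_unique h1 h2 hagree hdiff
    subst hn
    rw [if_pos hvn, if_pos hvn] at hP
    obtain ⟨m, hm1, hm2, hm3, m', hm'1, hm'2, hm'3, hbit⟩ := hP
    have hm : m = N + 1 :=
      run_unique hm1 hm2 hm3 (by omega) hrun1 vfun_m0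
    subst hm
    have hm' : m' = 2*N + 2 :=
      run_unique hm'1 hm'2 hm'3 (by omega) hrun2 vfun_m1
    subst hm'
    rw [ptrp_eq_posf] at hbit
    exact hbit
  · intro hbit
    refine ⟨nnf u, hagree, hdiff, ?_⟩
    rw [if_pos hvn, if_pos hvn]
    refine ⟨N+1, by omega, hrun1, vfun_m0, 2*N+2, by omega, hrun2, vfun_m1, ?_⟩
    rw [ptrp_eq_posf]
    exact hbit

lemma posf_inj {N : ℕ} {u u' : ℕ → Bool}
    (hf : ∀ k, N ≤ k → u k = false) (hf' : ∀ k, N ≤ k → u' k = false)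
    (h : posf N u = posf N u') : u = u' := by
  have hfex : ∃ k, u k = false := ⟨N, hf N le_rfl⟩
  have hfex' : ∃ k, u' k = false := ⟨N, hf' N le_rfl⟩
  have hle : nnf u ≤ N := nnf_le (hf N le_rfl)
  have hle' : nnf u' ≤ N := nnf_le (hf' N le_rfl)
  have hb : valw u (nnf u) N < 2^N := valw_lt _ _ _
  have hb' : valw u' (nnf u') N < 2^N := valw_lt _ _ _
  unfold posf at h
  have h2 : nnf u * 2^N + valw u (nnf u) N = nnf u' * 2^N + valw u' (nnf u') N := by
    omega
  have hc : 0 < 2^N := Nat.two_pow_pos N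
  have hnn : nnf u = nnf u' := by
    have e1 : (valw u (nnf u) N + nnf u * 2^N) / 2^N = nnf u := by
      rw [Nat.add_mul_div_right _ _ hc, Nat.div_eq_of_lt hb]; omega
    have e2 : (valw u' (nnf u') N + nnf u' * 2^N) / 2^N = nnf u' := by
      rw [Nat.add_mul_div_right _ _ hc, Nat.div_eq_of_lt hb']; omega
    rw [← e1, ← e2]
    congr 1
    omega
  have hval : valw u (nnf u) N = valw u' (nnf u) N := by
    rw [hnn] at h2 ⊢
    omega
  have hwin := valw_inj hval
  funext k
  rcases lt_trichotomy k (nnf u) with hk | hk | hk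
  · rw [nnf_lt hfex k hk, nnf_lt hfex' k (hnn ▸ hk)]
  · subst hk
    rw [nnf_false hfex]
    conv_rhs => rw [hnn]
    rw [nnf_false hfex']
  · by_cases hk2 : k ≤ nnf u + N
    · have hi : k - nnf u - 1 < N := by omega
      have hk3 : k = nnf u + 1 + (k - nnf u - 1) := by omega
      rw [hk3]
      exact hwin _ hi
    · rw [hf k (by omega), hf' k (by omega)]

lemma prop_R (A B : Finset (ℕ → Bool)) (hA : ↑A ⊆ Dset) (hB : ↑B ⊆ Dset)
    (hAB : Disjoint A B) :
    ∃ v ∈ Dset, v ∉ A ∧ v ∉ B ∧ (∀ a ∈ A, Egr v a) ∧ (∀ b ∈ B, ¬ Egr v b) := by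
  classical
  set S := A ∪ B with hS
  have hDS : ∀ u ∈ S, ∃ Nu, ∀ k, Nu ≤ k → u k = false := by
    intro u hu
    rcases Finset.mem_union.mp hu with h | h
    · exact hA h
    · exact hB h
  obtain ⟨N, hN⟩ : ∃ N, ∀ u ∈ S, ∀ k, N ≤ k → u k = false := by
    refine ⟨S.sup (fun u => if h : ∃ Nu, ∀ k, Nu ≤ k → u k = false then Nat.find h else 0),
      fun u hu k hk => ?_⟩
    have hex := hDS u hu
    have hsup : (if h : ∃ Nu, ∀ k, Nu ≤ k → u k = false then Nat.find h else 0) ≤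
        S.sup (fun u => if h : ∃ Nu, ∀ k, Nu ≤ k → u k = false then Nat.find h else 0) :=
      Finset.le_sup (f := fun u =>
        if h : ∃ Nu, ∀ k, Nu ≤ k → u k = false then Nat.find h else 0) hu
    rw [dif_pos hex] at hsup
    exact Nat.find_spec hex k (le_trans hsup hk)
  set v := vfun N B with hv
  have hfex : ∀ u ∈ S, ∃ k, u k = false := fun u hu => ⟨N, hN u hu N le_rfl⟩
  have hle : ∀ u ∈ S, nnf u ≤ N := fun u hu => nnf_le (hN u hu N le_rfl)
  have hvN : v N = true := vfun_true (by omega) (by omega)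
  have hvne : ∀ u ∈ S, v ≠ u := by
    intro u hu hc
    have h1 := hN u hu N le_rfl
    rw [← hc, hvN] at h1
    simp at h1
  have h2pow : 1 ≤ 2^N := Nat.one_le_two_pow
  have hposgt : ∀ u ∈ S, 2*N + 2 < posf N u := by
    intro u hu
    unfold posf
    omega
  refine ⟨v, ?_, ?_, ?_, ?_, ?_⟩
  · refine ⟨2*N + 4 + N * 2^N + 2^N, fun k hk => ?_⟩
    by_contra hvk
    have hvk' : v k = true := by
      cases hq : v k
      · exact absurd hq hvk
      · rfl
    have hk2 : 2*N + 2 < k := by omega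
    obtain ⟨u, huB, hpu⟩ := (vfun_table hk2).mp hvk'
    have huS : u ∈ S := Finset.mem_union_right A huB
    have hb1 := valw_lt u (nnf u) N
    have hb2 := hle u huS
    have hb3 : nnf u * 2^N ≤ N * 2^N := Nat.mul_le_mul_right _ hb2
    have : posf N u < k := by
      unfold posf
      omega
    omega
  · intro hvA
    exact hvne v (Finset.mem_union_left B hvA) rfl
  · intro hvB
    exact hvne v (Finset.mem_union_right A hvB) rfl
  · intro a haA
    have haS : a ∈ S := Finset.mem_union_left B haA
    refine Or.inr fun hbad => ?_
    have hbit := (badg_vfun_iff (hfex a haS) (hle a haS)).mp hbad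
    obtain ⟨u, huB, hpu⟩ := (vfun_table (hposgt a haS)).mp hbit
    have hu : u = a :=
      posf_inj (hN u (Finset.mem_union_right A huB)) (hN a haS) hpu
    subst hu
    exact Finset.disjoint_left.mp hAB haA huB
  · intro b hbB hE
    have hbS : b ∈ S := Finset.mem_union_right A hbB
    rcases hE with hEq | hnb
    · exact hvne b hbS hEq
    · apply hnb
      rw [badg_vfun_iff (hfex b hbS) (hle b hbS), vfun_table (hposgt b hbS)]
      exact ⟨b, hbB, rfl⟩

/-- There exists a closed reflexive symmetric relation E on the
Cantor space 2^ℕ and a countable topologically dense set D ⊆ 2^ℕ such that the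
induced graph on D satisfies property (R) (hence is isomorphic to the random
graph), and the graph (2^ℕ, E) has no isolated vertices. -/
theorem stmt_18 :
    ∃ E : (ℕ → Bool) → (ℕ → Bool) → Prop,
      IsClosed {p : (ℕ → Bool) × (ℕ → Bool) | E p.1 p.2} ∧
      (∀ x, E x x) ∧
      (∀ x y, E x y → E y x) ∧
      ∃ D : Set (ℕ → Bool),
        D.Countable ∧ Dense D ∧
        (∀ A B : Finset (ℕ → Bool), ↑A ⊆ D → ↑B ⊆ D → Disjoint A B →
          ∃ v ∈ D, v ∉ A ∧ v ∉ B ∧ (∀ a ∈ A, E v a) ∧ (∀ b ∈ B, ¬ E v b)) ∧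
        (∀ x : ℕ → Bool, ∃ y, y ≠ x ∧ E x y) := by
  exact ⟨Egr, Egr_closed, Egr_refl, fun _ _ h => Egr_symm h, Dset, Dset_countable,
    Dset_dense, prop_R, no_isolated⟩
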